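/- If N' = {n_{k+1} < n_{k+2} < ...} is obtained from the infinite set N = {n_1 < n_2 < ...} ⊆ ℕ by deleting its first k elements, and J = {j_1 < ... < j_m} is a finite subset of ℕ such that N'(J) is a Schreier set, then τ₁(N(J)) ≤ τ₁({n_1, ..., n_k}) + 1. -/

import Mathlib

/-- A Schreier set: a finite set `F` of naturals that is empty or satisfies `|F| ≤ min F`. -/
def IsSchreier (F : Finset ℕ) : Prop := ∀ h : F.Nonempty, F.card ≤ F.min' h

/-- `F < G` for finite sets of naturals: every element of `F` is below every element of `G`. -/
def FinsetLT (F G : Finset ℕ) : Prop := ∀ a ∈ F, ∀ b ∈ G, a < b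

/-- `A` can be covered by `m` consecutive Schreier sets `F 0 < F 1 < ⋯ < F (m-1)`. -/
def IsChainCover (A : Finset ℕ) (m : ℕ) : Prop :=
  ∃ F : Fin m → Finset ℕ, (∀ i, IsSchreier (F i)) ∧
    (∀ i j : Fin m, i < j → FinsetLT (F i) (F j)) ∧ ∀ a ∈ A, ∃ i, a ∈ F i

/-- The Schreier covering number `τ₁(A)`: the least number of consecutive Schreier sets
needed to cover the finite set `A` (with `τ₁(∅) = 0`). -/
noncomputable def tau1 (A : Finset ℕ) : ℕ := sInf {m | IsChainCover A m}

/-- `M(J)`: the elements of the infinite set `M` whose index (position, counted from `0`,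
in the increasing enumeration of `M`) belongs to the finite set `J`. -/
noncomputable def idxImage (M : Set ℕ) (J : Finset ℕ) : Finset ℕ :=
  J.image (Nat.nth (· ∈ M))

/-- The Gasparis–Leung index `GL₁(M,N) = sup {τ₁(M(J)) : J finite, N(J) ∈ S₁} ∈ ℕ ∪ {∞}`. -/
noncomputable def GL1 (M N : Set ℕ) : ℕ∞ :=
  ⨆ J ∈ {J : Finset ℕ | IsSchreier (idxImage N J)}, (tau1 (idxImage M J) : ℕ∞)

/-! ### Auxiliary material -/

/-- The greedy step function: from position `p`, a Schreier block starting at value `n p`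
can contain at most `n p` elements. -/
def gstep (n : ℕ → ℕ) (p : ℕ) : ℕ := p + n p

lemma gstep_le_self (n : ℕ → ℕ) (p : ℕ) : p ≤ gstep n p := Nat.le_add_right _ _

lemma le_iterate_gstep (n : ℕ → ℕ) (r p : ℕ) : p ≤ (gstep n)^[r] p := by
  induction r with
  | zero => simp
  | succ r ih =>
    rw [Function.iterate_succ_apply']
    exact ih.trans (gstep_le_self n _)

lemma iterate_gstep_mono_right (n : ℕ → ℕ) (p : ℕ) :
    Monotone (fun r => (gstep n)^[r] p) := by
  apply monotone_nat_of_le_succ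
  intro r
  rw [Function.iterate_succ_apply']
  exact gstep_le_self n _

/-- Greedy optimality (lower-bound direction): if `{n q, …, n (k-1)}` can be covered by a chain
of `r` Schreier sets, then the greedy iteration starting at index `q` reaches `k` in `r` steps. -/
lemma greedy_bound {n : ℕ → ℕ} (hmono : StrictMono n) :
    ∀ r q k : ℕ, IsChainCover ((Finset.Ico q k).image n) r → k ≤ (gstep n)^[r] q := by
  intro r
  induction r with
  | zero =>
    rintro q k ⟨F, -, -, hcov⟩
    by_contra h
    push_neg at h
    simp only [Function.iterate_zero_apply] at h
    obtain ⟨i, -⟩ := hcov (n q) (Finset.mem_image_of_mem n (by simp [Nat.le_of_lt h, h]))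
    exact i.elim0
  | succ r ih =>
    rintro q k ⟨F, hS, hLT, hcov⟩
    by_cases hqk : k ≤ q
    · exact hqk.trans (le_iterate_gstep n _ _)
    push_neg at hqk
    have hqmem : n q ∈ (Finset.Ico q k).image n :=
      Finset.mem_image_of_mem n (by simp [hqk])
    obtain ⟨i₀, hi₀⟩ := hcov _ hqmem
    -- every covered element with index in `[q, k)` lies in a block of index `≥ i₀`
    have hA : ∀ p, q ≤ p → p < k → ∀ i, n p ∈ F i → i₀ ≤ i := by
      intro p hqp hpk i hpi
      by_contra hlt
      push_neg at hlt
      exact absurd (hLT i i₀ hlt _ hpi _ hi₀) (not_lt.2 (hmono.monotone hqp))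
    -- every covered element with index `≥ q + n q` lies in a block of index `> i₀`
    have hB : ∀ p, q + n q ≤ p → p < k → ∀ i, n p ∈ F i → i₀ < i := by
      intro p hp hpk i hpi
      have hqp : q ≤ p := le_trans (Nat.le_add_right _ _) hp
      have hi : i₀ ≤ i := hA p hqp hpk i hpi
      rcases lt_or_eq_of_le hi with h | h
      · exact h
      exfalso
      subst h
      have hsub : (Finset.Icc q p).image n ⊆ F i₀ := by
        intro a ha
        obtain ⟨p', hp', rfl⟩ := Finset.mem_image.1 ha
        rw [Finset.mem_Icc] at hp'
        obtain ⟨j, hj⟩ := hcov (n p')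
          (Finset.mem_image_of_mem n (Finset.mem_Ico.2 ⟨hp'.1, lt_of_le_of_lt hp'.2 hpk⟩))
        have h1 : i₀ ≤ j := hA p' hp'.1 (lt_of_le_of_lt hp'.2 hpk) j hj
        rcases lt_or_eq_of_le h1 with h2 | h2
        · exact absurd (hLT i₀ j h2 _ hpi _ hj) (not_lt.2 (hmono.monotone hp'.2))
        · rw [← h2] at hj; exact hj
      have hcard1 : ((Finset.Icc q p).image n).card = p - q + 1 := by
        rw [Finset.card_image_of_injective _ hmono.injective, Nat.card_Icc]
        omega
      have hcard2 : (F i₀).card ≤ n q := by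
        have hne : (F i₀).Nonempty := ⟨n q, hi₀⟩
        exact (hS i₀ hne).trans (Finset.min'_le _ _ hi₀)
      have := Finset.card_le_card hsub
      omega
    -- drop the blocks up to `i₀` and recurse
    have hcov' : IsChainCover ((Finset.Ico (q + n q) k).image n) r := by
      refine ⟨fun i => if h : (i₀ : ℕ) + 1 + i < r + 1 then F ⟨(i₀ : ℕ) + 1 + i, h⟩ else ∅,
        ?_, ?_, ?_⟩
      · intro i
        dsimp only
        split
        · exact hS _
        · intro hne; exact absurd hne (by simp)
      · intro i j hij
        dsimp only
        split
        · split
          · exact hLT _ _ (by simp only [Fin.mk_lt_mk]; omega)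
          · intro a _ b hb; simp at hb
        · intro a ha; simp at ha
      · intro a ha
        obtain ⟨p, hp, rfl⟩ := Finset.mem_image.1 ha
        rw [Finset.mem_Ico] at hp
        obtain ⟨j, hj⟩ := hcov (n p)
          (Finset.mem_image_of_mem n
            (Finset.mem_Ico.2 ⟨le_trans (Nat.le_add_right _ _) hp.1, hp.2⟩))
        have hij : i₀ < j := hB p hp.1 hp.2 j hj
        have hjr : (j : ℕ) < r + 1 := j.isLt
        refine ⟨⟨(j : ℕ) - ((i₀ : ℕ) + 1), by omega⟩, ?_⟩
        dsimp only
        rw [dif_pos (by omega : (i₀ : ℕ) + 1 + ((j : ℕ) - ((i₀ : ℕ) + 1)) < r + 1)]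
        have : (⟨(i₀ : ℕ) + 1 + ((j : ℕ) - ((i₀ : ℕ) + 1)), by omega⟩ : Fin (r + 1)) = j :=
          Fin.ext (by simp; omega)
        rw [this]
        exact hj
    have := ih (q + n q) k hcov'
    rwa [Function.iterate_succ_apply]

theorem tau1_delete_first (N : Set ℕ) (hN : N.Infinite) (hN0 : 0 ∉ N) (k : ℕ)
    (J : Finset ℕ) (hJ : J.Nonempty)
    (hSchreier : IsSchreier (idxImage (N \ ↑(idxImage N (Finset.range k))) J)) :
    tau1 (idxImage N J) ≤ tau1 (idxImage N (Finset.range k)) + 1 := by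
  classical
  have hNs : (setOf (· ∈ N)).Infinite := by exact hN
  set n : ℕ → ℕ := Nat.nth (· ∈ N) with hn
  have hmono : StrictMono n := Nat.nth_strictMono hNs
  have hmemN : ∀ i, n i ∈ N := fun i => Nat.nth_mem_of_infinite hNs i
  have hone : ∀ i, 1 ≤ n i := by
    intro i
    rcases Nat.eq_zero_or_pos (n i) with h | h
    · exact absurd (h ▸ hmemN i) hN0
    · exact h
  -- the first `k` elements of `N`
  set P : Finset ℕ := idxImage N (Finset.range k) with hP
  have hPimage : P = (Finset.range k).image n := rfl
  set N' : Set ℕ := N \ ↑P with hN'def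
  have hN's : (setOf (· ∈ N')).Infinite := by
    show N'.Infinite
    exact hN.diff P.finite_toSet
  have hmono' : StrictMono (Nat.nth (· ∈ N')) := Nat.nth_strictMono hN's
  -- the increasing enumeration of `N'` is the shift by `k` of that of `N`
  have hshift : ∀ i, Nat.nth (· ∈ N') i = n (k + i) := by
    have h2 : StrictMono (fun i => n (k + i)) :=
      fun a b hab => hmono (by omega)
    have hrange : Set.range (Nat.nth (· ∈ N')) = Set.range (fun i => n (k + i)) := by
      rw [Nat.range_nth_of_infinite hN's, Set.setOf_mem_eq]
      ext x
      constructor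
      · rintro ⟨hxN, hx2⟩
        have hx : n (Nat.count (· ∈ N) x) = x := Nat.nth_count hxN
        have hik : k ≤ Nat.count (· ∈ N) x := by
          by_contra hik
          push_neg at hik
          exact hx2 (Finset.mem_coe.2 (Finset.mem_image.2
            ⟨Nat.count (· ∈ N) x, Finset.mem_range.2 hik, hx⟩))
        exact ⟨Nat.count (· ∈ N) x - k, by simp only []; rw [Nat.add_sub_cancel' hik]; exact hx⟩
      · rintro ⟨i, rfl⟩
        refine ⟨hmemN (k + i), ?_⟩
        intro hmem
        obtain ⟨j, hj, hje⟩ := Finset.mem_image.1 (Finset.mem_coe.1 hmem)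
        rw [Finset.mem_range] at hj
        have := hmono.injective hje
        omega
    have := (hmono'.range_inj h2).1 hrange
    exact fun i => congrFun this i
  -- the Schreier hypothesis at the minimum of `J`
  set j₁ : ℕ := J.min' hJ with hj₁
  have hm : J.card ≤ n (k + j₁) := by
    have hne' : (idxImage N' J).Nonempty := hJ.image _
    have hcard' : (idxImage N' J).card = J.card :=
      Finset.card_image_of_injective J hmono'.injective
    have hmin' : (idxImage N' J).min' hne' = Nat.nth (· ∈ N') j₁ := by
      apply le_antisymm
      · exact Finset.min'_le _ _ (Finset.mem_image_of_mem _ (J.min'_mem hJ))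
      · apply Finset.le_min'
        rintro y hy
        obtain ⟨j, hj, rfl⟩ := Finset.mem_image.1 hy
        exact hmono'.monotone (J.min'_le j hj)
    have := hSchreier hne'
    rw [hcard', hmin', hshift] at this
    exact this
  set t : ℕ := tau1 P with ht
  -- `P` has at least one chain cover, hence `t` itself is one
  have hPcov : IsChainCover P k := by
    refine ⟨fun i => {n (i : ℕ)}, ?_, ?_, ?_⟩
    · intro i hne
      simp [hone]
    · intro i j hij a ha b hb
      rw [Finset.mem_singleton] at ha hb
      subst ha; subst hb
      exact hmono hij
    · intro a ha
      obtain ⟨j, hj, rfl⟩ := Finset.mem_image.1 ha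
      rw [Finset.mem_range] at hj
      exact ⟨⟨j, hj⟩, Finset.mem_singleton_self _⟩
  have htcov : IsChainCover P t := Nat.sInf_mem (⟨k, hPcov⟩ : {m | IsChainCover P m}.Nonempty)
  have hkey : k ≤ (gstep n)^[t] 0 := by
    apply greedy_bound hmono t 0 k
    rwa [← Finset.range_eq_Ico, ← hPimage]
  -- greedy iterations starting from `j₁` dominate those starting from `0`, shifted by `j₁`
  have hus : ∀ r, (gstep n)^[r] 0 + j₁ ≤ (gstep n)^[r] j₁ := by
    intro r
    induction r with
    | zero => simp
    | succ r ih =>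
      rw [Function.iterate_succ_apply', Function.iterate_succ_apply']
      have h1 : (gstep n)^[r] 0 ≤ (gstep n)^[r] j₁ := le_trans (Nat.le_add_right _ _) ih
      have h2 : n ((gstep n)^[r] 0) ≤ n ((gstep n)^[r] j₁) := hmono.monotone h1
      simp only [gstep]
      omega
  have hut : k + j₁ ≤ (gstep n)^[t] j₁ := le_trans (by omega) (hus t)
  -- construct the chain cover of `N(J)` with `t + 1` blocks
  apply Nat.sInf_le
  refine ⟨fun r => ((J.filter
      (fun j => (gstep n)^[(r : ℕ)] j₁ ≤ j ∧ (j < (gstep n)^[(r : ℕ) + 1] j₁ ∨ (r : ℕ) = t))).image n),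
    ?_, ?_, ?_⟩
  · -- each block is Schreier
    intro r hne
    dsimp only at hne ⊢
    have hminb : n ((gstep n)^[(r : ℕ)] j₁) ≤ Finset.min' _ hne := by
      apply Finset.le_min'
      rintro y hy
      obtain ⟨j, hj, rfl⟩ := Finset.mem_image.1 hy
      rw [Finset.mem_filter] at hj
      exact hmono.monotone hj.2.1
    by_cases hr : (r : ℕ) = t
    · have hc1 : (Finset.filter
          (fun j => (gstep n)^[(r : ℕ)] j₁ ≤ j ∧ (j < (gstep n)^[(r : ℕ) + 1] j₁ ∨ (r : ℕ) = t)) J).card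
          ≤ J.card := Finset.card_filter_le _ _
      have hc2 := Finset.card_image_le (s := (J.filter
          (fun j => (gstep n)^[(r : ℕ)] j₁ ≤ j ∧ (j < (gstep n)^[(r : ℕ) + 1] j₁ ∨ (r : ℕ) = t)))) (f := n)
      have hmn : n (k + j₁) ≤ n ((gstep n)^[(r : ℕ)] j₁) := by
        apply hmono.monotone
        rw [hr]
        exact hut
      omega
    · have hsubI : (J.filter
          (fun j => (gstep n)^[(r : ℕ)] j₁ ≤ j ∧ (j < (gstep n)^[(r : ℕ) + 1] j₁ ∨ (r : ℕ) = t)))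
          ⊆ Finset.Ico ((gstep n)^[(r : ℕ)] j₁) ((gstep n)^[(r : ℕ) + 1] j₁) := by
        intro j hj
        rw [Finset.mem_filter] at hj
        rcases hj.2.2 with h | h
        · exact Finset.mem_Ico.2 ⟨hj.2.1, h⟩
        · exact absurd h hr
      have hc1 := Finset.card_le_card hsubI
      have hc2 := Finset.card_image_le (s := (J.filter
          (fun j => (gstep n)^[(r : ℕ)] j₁ ≤ j ∧ (j < (gstep n)^[(r : ℕ) + 1] j₁ ∨ (r : ℕ) = t)))) (f := n)
      have hIco : (Finset.Ico ((gstep n)^[(r : ℕ)] j₁) ((gstep n)^[(r : ℕ) + 1] j₁)).card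
          = n ((gstep n)^[(r : ℕ)] j₁) := by
        rw [Nat.card_Ico, Function.iterate_succ_apply']
        simp only [gstep]
        omega
      omega
  · -- consecutive blocks
    intro r r' hrr' a ha b hb
    obtain ⟨j, hj, rfl⟩ := Finset.mem_image.1 ha
    obtain ⟨j', hj', rfl⟩ := Finset.mem_image.1 hb
    rw [Finset.mem_filter] at hj hj'
    have hrt : (r : ℕ) ≠ t := by
      have := r'.isLt
      have : (r : ℕ) < (r' : ℕ) := hrr'
      omega
    have h1 : j < (gstep n)^[(r : ℕ) + 1] j₁ := by
      rcases hj.2.2 with h | h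
      · exact h
      · exact absurd h hrt
    have h2 : (gstep n)^[(r : ℕ) + 1] j₁ ≤ (gstep n)^[(r' : ℕ)] j₁ :=
      iterate_gstep_mono_right n j₁ (by exact_mod_cast Nat.succ_le_of_lt hrr')
    exact hmono (by omega : j < j')
  · -- the blocks cover `N(J)`
    intro a ha
    obtain ⟨j, hj, rfl⟩ := Finset.mem_image.1 ha
    have hjj₁ : j₁ ≤ j := J.min'_le j hj
    by_cases hjt : (gstep n)^[t] j₁ ≤ j
    · exact ⟨⟨t, Nat.lt_succ_self t⟩, Finset.mem_image_of_mem _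
        (Finset.mem_filter.2 ⟨hj, hjt, Or.inr rfl⟩)⟩
    · push_neg at hjt
      have hbet : ∀ r, j < (gstep n)^[r] j₁ →
          ∃ i < r, (gstep n)^[i] j₁ ≤ j ∧ j < (gstep n)^[i+1] j₁ := by
        intro r
        induction r with
        | zero => intro h; simp only [Function.iterate_zero_apply] at h; omega
        | succ r ih =>
          intro h
          by_cases h2 : j < (gstep n)^[r] j₁
          · obtain ⟨i, hi, h3⟩ := ih h2
            exact ⟨i, Nat.lt_succ_of_lt hi, h3⟩
          · exact ⟨r, Nat.lt_succ_self r, not_lt.1 h2, h⟩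
      obtain ⟨i, hi, h3, h4⟩ := hbet t hjt
      exact ⟨⟨i, Nat.lt_succ_of_lt hi⟩, Finset.mem_image_of_mem _
        (Finset.mem_filter.2 ⟨hj, h3, Or.inl h4⟩)⟩
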